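/- arXiv:2310.04156 — 2 statements merged into one kernel-verified Lean document; each statement's English description precedes it below -/
import Mathlib

section
/- Let Z be a finite set, d ≥ 1, and fix weights p : Z → ℝ with p_z ≥ 0 and Σ_{z∈Z} p_z = 1. Fix Hermitian d×d complex matrices A_z^{(i)} for z ∈ Z and i = 1,…,R, and real numbers b_1,…,b_R. Let K be the set of all families (ρ_z)_{z∈Z} of d×d density matrices satisfying Σ_{z∈Z} p_z Tr[A_z^{(i)} ρ_z] = b_i for every i = 1,…,R. If K is nonempty, then there exists a family (σ_z)_{z∈Z} ∈ K such that at most R of the matrices σ_z are not pure (i.e., all but at most R of them satisfy Tr[σ_z²] = 1). -/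
open Matrix ComplexOrder

variable {d : ℕ}

/-- trace of product formula -/
lemma trace_mul_eq_sum (M N : Matrix (Fin d) (Fin d) ℂ) :
    (M * N).trace = ∑ i, ∑ j, M i j * N j i := by
  simp [Matrix.trace, Matrix.mul_apply, Matrix.diag]

/-- for Hermitian H, trace (H*H) is the sum of squared norms of entries -/
lemma trace_mul_self_herm {H : Matrix (Fin d) (Fin d) ℂ} (hH : H.IsHermitian) :
    (H * H).trace = ((∑ i, ∑ j, ‖H i j‖ ^ 2 : ℝ) : ℂ) := by
  rw [trace_mul_eq_sum]
  push_cast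
  refine Finset.sum_congr rfl fun i _ => Finset.sum_congr rfl fun j _ => ?_
  have : H j i = (starRingEnd ℂ) (H i j) := by
    rw [← hH.apply i j]
    simp [Matrix.conjTranspose_apply]
  rw [this, Complex.mul_conj, Complex.normSq_eq_norm_sq]
  norm_cast

/-- trace of a product of two Hermitian matrices is real -/
lemma trace_mul_herm_real {A H : Matrix (Fin d) (Fin d) ℂ} (hA : A.IsHermitian)
    (hH : H.IsHermitian) : (A * H).trace = (((A * H).trace).re : ℂ) := by
  have h1 : star ((A * H).trace) = (A * H).trace := by
    rw [← Matrix.trace_conjTranspose, Matrix.conjTranspose_mul, hA.eq, hH.eq,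
      Matrix.trace_mul_comm]
  exact (Complex.conj_eq_iff_re.mp h1).symm

lemma trace_conj {U D : Matrix (Fin d) (Fin d) ℂ} (hU : star U * U = 1) :
    (U * D * star U).trace = D.trace := by
  rw [Matrix.trace_mul_cycle, hU, Matrix.one_mul]

lemma conj_mul_conj {U D1 D2 : Matrix (Fin d) (Fin d) ℂ} (hU : star U * U = 1) :
    (U * D1 * star U) * (U * D2 * star U) = U * (D1 * D2) * star U := by
  have h : star U * (U * (D2 * star U)) = D2 * star U := by
    rw [← Matrix.mul_assoc, hU, Matrix.one_mul]
  calc (U * D1 * star U) * (U * D2 * star U)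
      = U * (D1 * (star U * (U * (D2 * star U)))) := by
        simp only [Matrix.mul_assoc]
    _ = U * (D1 * D2) * star U := by rw [h]; simp only [Matrix.mul_assoc]

lemma psd_trace_eq {M : Matrix (Fin d) (Fin d) ℂ} (h : M.PosSemidef) :
    M.trace = ((∑ i, h.1.eigenvalues i : ℝ) : ℂ) := by
  conv_lhs => rw [h.1.spectral_theorem, Unitary.conjStarAlgAut_apply]
  rw [trace_conj (Matrix.mem_unitaryGroup_iff'.mp (Matrix.IsHermitian.eigenvectorUnitary h.1).2),
    Matrix.trace_diagonal]
  push_cast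
  rfl

lemma psd_trace_sq_eq {M : Matrix (Fin d) (Fin d) ℂ} (h : M.PosSemidef) :
    (M * M).trace = ((∑ i, (h.1.eigenvalues i) ^ 2 : ℝ) : ℂ) := by
  have hU' := Matrix.mem_unitaryGroup_iff'.mp (Matrix.IsHermitian.eigenvectorUnitary h.1).2
  conv_lhs => rw [h.1.spectral_theorem, Unitary.conjStarAlgAut_apply]
  rw [conj_mul_conj hU', Matrix.diagonal_mul_diagonal, trace_conj hU', Matrix.trace_diagonal]
  push_cast
  refine Finset.sum_congr rfl fun i _ => ?_
  simp [Function.comp, pow_two]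

lemma psd_real_smul {M : Matrix (Fin d) (Fin d) ℂ} (h : M.PosSemidef) {r : ℝ} (hr : 0 ≤ r) :
    (r • M).PosSemidef := by
  rw [Matrix.posSemidef_iff_dotProduct_mulVec]
  constructor
  · show (r • M)ᴴ = r • M
    rw [Matrix.conjTranspose_smul, h.1.eq]
    congr 1
  · intro x
    have : (r • M) *ᵥ x = r • (M *ᵥ x) := Matrix.smul_mulVec r M x
    rw [this, dotProduct_smul]
    have h0 : (0:ℂ) ≤ (r:ℂ) := by exact_mod_cast Complex.zero_le_real.mpr hr
    calc (0:ℂ) = (r:ℂ) * 0 := by ring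
    _ ≤ (r:ℂ) * (dotProduct (star x) (M *ᵥ x)) := by
        exact mul_le_mul_of_nonneg_left (h.dotProduct_mulVec_nonneg x) h0
    _ = r • (dotProduct (star x) (M *ᵥ x)) := by
        rw [Complex.real_smul]

lemma psd_combo {M H : Matrix (Fin d) (Fin d) ℂ} (h1 : (M + H).PosSemidef)
    (h2 : (M - H).PosSemidef) {c : ℝ} (hc : |c| ≤ 1) : (M + c • H).PosSemidef := by
  obtain ⟨hc1, hc2⟩ := abs_le.mp hc
  have key : M + c • H = ((1 + c) / 2) • (M + H) + ((1 - c) / 2) • (M - H) := by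
    module
  rw [key]
  exact (psd_real_smul h1 (by linarith)).add (psd_real_smul h2 (by linarith))

lemma exists_two_pos {lam : Fin d → ℝ} (hnn : ∀ i, 0 ≤ lam i) (hsum : ∑ i, lam i = 1)
    (hsq : ∑ i, (lam i) ^ 2 ≠ 1) : ∃ j k, j ≠ k ∧ 0 < lam j ∧ 0 < lam k := by
  by_contra hcon
  push_neg at hcon
  have key : ∀ i j : Fin d, i ≠ j → lam i * lam j = 0 := by
    intro i j hij
    rcases lt_or_eq_of_le (hnn i) with hi | hi
    · rcases lt_or_eq_of_le (hnn j) with hj | hj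
      · linarith [hcon i j hij hi]
      · rw [← hj, mul_zero]
    · rw [← hi, zero_mul]
  apply hsq
  have : (∑ i, lam i) * (∑ j, lam j) = ∑ i, (lam i) ^ 2 := by
    rw [Finset.sum_mul_sum]
    refine Finset.sum_congr rfl fun i _ => ?_
    rw [Finset.sum_eq_single i]
    · ring
    · exact fun j _ hji => key i j (Ne.symm hji)
    · intro h; exact absurd (Finset.mem_univ i) h
  rw [← this, hsum, mul_one]

lemma exists_perturbation {M : Matrix (Fin d) (Fin d) ℂ} (h : M.PosSemidef)
    (htr : M.trace = 1) (hmix : (M * M).trace ≠ 1) :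
    ∃ H : Matrix (Fin d) (Fin d) ℂ, H.IsHermitian ∧ H.trace = 0 ∧
      (M + H).PosSemidef ∧ (M - H).PosSemidef ∧ 0 < ((H * H).trace).re := by
  set lam := h.1.eigenvalues with hlam
  have hU := Matrix.mem_unitaryGroup_iff.mp (Matrix.IsHermitian.eigenvectorUnitary h.1).2
  have hU' := Matrix.mem_unitaryGroup_iff'.mp (Matrix.IsHermitian.eigenvectorUnitary h.1).2
  set U : Matrix (Fin d) (Fin d) ℂ := (Matrix.IsHermitian.eigenvectorUnitary h.1 : Matrix (Fin d) (Fin d) ℂ) with hUdef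
  have hnn : ∀ i, 0 ≤ lam i := h.eigenvalues_nonneg
  have hsum : ∑ i, lam i = 1 := by
    have := psd_trace_eq h
    rw [htr] at this
    exact_mod_cast this.symm
  have hsq : ∑ i, (lam i) ^ 2 ≠ 1 := by
    intro hcon
    apply hmix
    rw [psd_trace_sq_eq h, ← hlam, hcon, Complex.ofReal_one]
  obtain ⟨j, k, hjk, hj, hk⟩ := exists_two_pos hnn hsum hsq
  set t := min (lam j) (lam k) with htdef
  have ht : 0 < t := lt_min hj hk
  set dl : Fin d → ℝ := fun i => (Pi.single j t : Fin d → ℝ) i - (Pi.single k t : Fin d → ℝ) i with hdl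
  have dlj : dl j = t := by
    simp [hdl, Pi.single_eq_same, Pi.single_eq_of_ne hjk]
  have dlk : dl k = -t := by
    simp [hdl, Pi.single_eq_same, Pi.single_eq_of_ne (Ne.symm hjk)]
  have dl0 : ∀ i, i ≠ j → i ≠ k → dl i = 0 := by
    intro i hij hik
    simp [hdl, Pi.single_eq_of_ne hij, Pi.single_eq_of_ne hik]
  have htj : t ≤ lam j := min_le_left _ _
  have htk : t ≤ lam k := min_le_right _ _
  have hbound : ∀ i, 0 ≤ lam i + dl i ∧ 0 ≤ lam i - dl i := by
    intro i
    rcases eq_or_ne i j with hij | hij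
    · rw [hij, dlj]
      constructor <;> linarith
    rcases eq_or_ne i k with hik | hik
    · rw [hik, dlk]
      constructor <;> linarith
    · rw [dl0 i hij hik]
      have := hnn i
      constructor <;> linarith
  set D : Matrix (Fin d) (Fin d) ℂ := Matrix.diagonal (fun i => (dl i : ℂ)) with hD
  refine ⟨U * D * star U, ?_, ?_, ?_, ?_, ?_⟩
  · -- Hermitian
    show (U * D * star U)ᴴ = U * D * star U
    rw [Matrix.conjTranspose_mul, Matrix.conjTranspose_mul, Matrix.star_eq_conjTranspose,
      Matrix.conjTranspose_conjTranspose]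
    have hv : star (fun i => ((dl i : ℝ) : ℂ)) = fun i => ((dl i : ℝ) : ℂ) := by
      funext i
      simp [Pi.star_apply, Complex.star_def, Complex.conj_ofReal]
    have hDh : Dᴴ = D := by
      rw [hD, Matrix.diagonal_conjTranspose, hv]
    rw [hDh, Matrix.mul_assoc]
  · -- trace 0
    rw [trace_conj hU', hD, Matrix.trace_diagonal]
    have : ∑ i, dl i = 0 := by
      rw [hdl]
      simp [Finset.sum_sub_distrib, Finset.sum_pi_single]
    rw [← Complex.ofReal_sum, this, Complex.ofReal_zero]
  · -- M + H psd
    rw [h.1.spectral_theorem, Unitary.conjStarAlgAut_apply, ← hUdef, ← hlam]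
    have : (U * Matrix.diagonal (RCLike.ofReal ∘ lam) * star U) + U * D * star U
        = U * Matrix.diagonal (fun i => ((lam i + dl i : ℝ) : ℂ)) * star U := by
      rw [← Matrix.add_mul, ← Matrix.mul_add, Matrix.diagonal_add]
      congr 2
      funext i
      simp [Function.comp]
    rw [this, Matrix.star_eq_conjTranspose]
    refine Matrix.PosSemidef.mul_mul_conjTranspose_same (Matrix.PosSemidef.diagonal ?_) U
    intro i
    show (0:ℂ) ≤ ((lam i + dl i : ℝ) : ℂ)
    exact_mod_cast Complex.zero_le_real.mpr (hbound i).1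
  · -- M - H psd
    rw [h.1.spectral_theorem, Unitary.conjStarAlgAut_apply, ← hUdef, ← hlam]
    have : (U * Matrix.diagonal (RCLike.ofReal ∘ lam) * star U) - U * D * star U
        = U * Matrix.diagonal (fun i => ((lam i - dl i : ℝ) : ℂ)) * star U := by
      rw [← Matrix.sub_mul, ← Matrix.mul_sub, Matrix.diagonal_sub]
      congr 2
      funext i
      simp [Function.comp]
    rw [this, Matrix.star_eq_conjTranspose]
    refine Matrix.PosSemidef.mul_mul_conjTranspose_same (Matrix.PosSemidef.diagonal ?_) U
    intro i
    show (0:ℂ) ≤ ((lam i - dl i : ℝ) : ℂ)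
    exact_mod_cast Complex.zero_le_real.mpr (hbound i).2
  · -- positive purity direction
    rw [conj_mul_conj hU', hD, Matrix.diagonal_mul_diagonal, trace_conj hU',
      Matrix.trace_diagonal]
    have : ∀ i, (dl i : ℂ) * (dl i : ℂ) = ((dl i ^ 2 : ℝ) : ℂ) := by
      intro i; push_cast; ring
    simp only [this]
    rw [← Complex.ofReal_sum, Complex.ofReal_re]
    refine Finset.sum_pos' (fun i _ => sq_nonneg _) ⟨j, Finset.mem_univ j, ?_⟩
    rw [dlj]
    positivity

lemma isClosed_psd : IsClosed {M : Matrix (Fin d) (Fin d) ℂ | M.PosSemidef} := by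
  have : {M : Matrix (Fin d) (Fin d) ℂ | M.PosSemidef}
      = {M : Matrix (Fin d) (Fin d) ℂ | Mᴴ = M}
        ∩ ⋂ x : Fin d → ℂ, {M | 0 ≤ dotProduct (star x) (M *ᵥ x)} := by
    ext M
    simp only [Set.mem_setOf_eq, Set.mem_inter_iff, Set.mem_iInter]
    exact Matrix.posSemidef_iff_dotProduct_mulVec
  rw [this]
  refine IsClosed.inter (isClosed_eq (continuous_id.matrix_conjTranspose) continuous_id) ?_
  refine isClosed_iInter fun x => ?_
  have hcont : Continuous fun M : Matrix (Fin d) (Fin d) ℂ =>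
      dotProduct (star x) (M *ᵥ x) :=
    continuous_const.dotProduct (continuous_id.matrix_mulVec continuous_const)
  have hcl : IsClosed {c : ℂ | 0 ≤ c} := by
    have : {c : ℂ | 0 ≤ c} = Complex.re ⁻¹' Set.Ici 0 ∩ Complex.im ⁻¹' {0} := by
      ext c
      simp [Complex.le_def, eq_comm]
    rw [this]
    exact (isClosed_Ici.preimage Complex.continuous_re).inter
      (isClosed_singleton.preimage Complex.continuous_im)
  exact hcl.preimage hcont

lemma sum_sq_le_one {lam : Fin d → ℝ} (hnn : ∀ i, 0 ≤ lam i) (hsum : ∑ i, lam i = 1) :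
    ∑ i, (lam i) ^ 2 ≤ 1 := by
  have h1 : ∀ i, lam i ≤ 1 := by
    intro i
    rw [← hsum]
    exact Finset.single_le_sum (fun j _ => hnn j) (Finset.mem_univ i)
  calc ∑ i, (lam i) ^ 2 ≤ ∑ i, lam i := by
        refine Finset.sum_le_sum fun i _ => ?_
        nlinarith [hnn i, h1 i]
    _ = 1 := hsum

lemma entry_bound {M : Matrix (Fin d) (Fin d) ℂ} (h : M.PosSemidef) (htr : M.trace = 1)
    (i j : Fin d) : ‖M i j‖ ≤ 1 := by
  have hsum : ∑ i, h.1.eigenvalues i = 1 := by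
    have := psd_trace_eq h
    rw [htr] at this
    exact_mod_cast this.symm
  have hfro : ∑ a, ∑ b, ‖M a b‖ ^ 2 ≤ 1 := by
    have h1 := trace_mul_self_herm h.1
    have h2 := psd_trace_sq_eq h
    have : (∑ a, ∑ b, ‖M a b‖ ^ 2 : ℝ) = ∑ i, (h.1.eigenvalues i) ^ 2 := by
      have := h1.symm.trans h2
      exact_mod_cast this
    rw [this]
    exact sum_sq_le_one h.eigenvalues_nonneg hsum
  have hle : ‖M i j‖ ^ 2 ≤ 1 := by
    calc ‖M i j‖ ^ 2 ≤ ∑ b, ‖M i b‖ ^ 2 :=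
          Finset.single_le_sum (f := fun b => ‖M i b‖ ^ 2)
            (fun b _ => sq_nonneg _) (Finset.mem_univ j)
      _ ≤ ∑ a, ∑ b, ‖M a b‖ ^ 2 :=
          Finset.single_le_sum (f := fun a => ∑ b, ‖M a b‖ ^ 2)
            (fun a _ => Finset.sum_nonneg fun b _ => sq_nonneg _) (Finset.mem_univ i)
      _ ≤ 1 := hfro
  nlinarith [norm_nonneg (M i j)]

lemma isCompact_density : IsCompact {M : Matrix (Fin d) (Fin d) ℂ | M.PosSemidef ∧ M.trace = 1} := by
  have hclosed : IsClosed {M : Matrix (Fin d) (Fin d) ℂ | M.PosSemidef ∧ M.trace = 1} :=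
    isClosed_psd.inter (isClosed_eq (continuous_id.matrix_trace) continuous_const)
  have hbig : IsCompact {M : Matrix (Fin d) (Fin d) ℂ | ∀ i j, M i j ∈ Metric.closedBall (0:ℂ) 1} := by
    have : {M : Matrix (Fin d) (Fin d) ℂ | ∀ i j, M i j ∈ Metric.closedBall (0:ℂ) 1}
        = Set.univ.pi (fun _ : Fin d => Set.univ.pi fun _ : Fin d => Metric.closedBall (0:ℂ) 1) := by
      ext M
      constructor
      · intro h
        refine Set.mem_univ_pi.mpr fun i => Set.mem_univ_pi.mpr fun j => ?_
        simpa [dist_zero_right] using h i j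
      · intro h i j
        have := Set.mem_univ_pi.mp (Set.mem_univ_pi.mp h i) j
        simpa [dist_zero_right] using this
    rw [this]
    exact isCompact_univ_pi fun _ => isCompact_univ_pi fun _ => isCompact_closedBall _ _
  refine hbig.of_isClosed_subset hclosed ?_
  intro M hM i j
  rw [Metric.mem_closedBall, dist_zero_right]
  exact entry_bound hM.1 hM.2 i j

/-- **Corollary of Theorem 1 of the paper.**
If the feasible set of ensembles consistent with `R` linear constraints is nonempty, it
contains an ensemble with at most `R` non-pure states. -/
theorem exists_consistent_ensemble_with_at_most_R_mixed_states
    {Z : Type*} [Fintype Z] (d R : ℕ) (hd : 1 ≤ d)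
    (p : Z → ℝ) (hp : ∀ z, 0 ≤ p z) (hp1 : ∑ z, p z = 1)
    (A : Z → Fin R → Matrix (Fin d) (Fin d) ℂ)
    (hA : ∀ z i, (A z i).IsHermitian)
    (b : Fin R → ℝ)
    (K : Set (Z → Matrix (Fin d) (Fin d) ℂ))
    (hK : K = {ρ | (∀ z, (ρ z).PosSemidef ∧ (ρ z).trace = 1) ∧
        ∀ i, ∑ z, (p z : ℂ) * (A z i * ρ z).trace = (b i : ℂ)})
    (hne : K.Nonempty) :
    ∃ σ ∈ K, {z : Z | (σ z * σ z).trace ≠ 1}.ncard ≤ R := by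
  classical
  -- compactness of K
  have hKsub : K ⊆ Set.univ.pi (fun _ : Z => {M : Matrix (Fin d) (Fin d) ℂ |
      M.PosSemidef ∧ M.trace = 1}) := by
    intro ρ hρ
    rw [hK] at hρ
    exact Set.mem_univ_pi.mpr fun z => ⟨(hρ.1 z).1, (hρ.1 z).2⟩
  have hKclosed : IsClosed K := by
    rw [hK]
    have hsplit : {ρ : Z → Matrix (Fin d) (Fin d) ℂ |
        (∀ z, (ρ z).PosSemidef ∧ (ρ z).trace = 1) ∧
        ∀ i, ∑ z, (p z : ℂ) * (A z i * ρ z).trace = (b i : ℂ)}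
        = (Set.univ.pi (fun _ : Z => {M : Matrix (Fin d) (Fin d) ℂ |
            M.PosSemidef ∧ M.trace = 1}))
          ∩ ⋂ i : Fin R, {ρ | ∑ z, (p z : ℂ) * (A z i * ρ z).trace = (b i : ℂ)} := by
      ext ρ
      simp only [Set.mem_setOf_eq, Set.mem_inter_iff, Set.mem_iInter, Set.mem_univ_pi]
    rw [hsplit]
    refine IsClosed.inter (isClosed_set_pi fun z _ => ?_) (isClosed_iInter fun i => ?_)
    · exact isClosed_psd.inter (isClosed_eq continuous_id.matrix_trace continuous_const)
    · refine isClosed_eq ?_ continuous_const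
      refine continuous_finset_sum _ fun z _ => ?_
      exact continuous_const.mul ((continuous_const.matrix_mul (continuous_apply z)).matrix_trace)
  have hKcomp : IsCompact K :=
    (isCompact_univ_pi fun _ => isCompact_density).of_isClosed_subset hKclosed hKsub
  -- purity functional
  set g : (Z → Matrix (Fin d) (Fin d) ℂ) → ℝ := fun ρ => ∑ z, ((ρ z * ρ z).trace).re with hg
  have hgcont : Continuous g := by
    refine continuous_finset_sum _ fun z _ => ?_
    exact Complex.continuous_re.comp (((continuous_apply z).matrix_mul (continuous_apply z)).matrix_trace)
  obtain ⟨σ, hσK, hmax⟩ := hKcomp.exists_isMaxOn hne hgcont.continuousOn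
  refine ⟨σ, hσK, ?_⟩
  by_contra hR
  push_neg at hR
  -- basic facts about σ
  have hσK' := hσK
  rw [hK] at hσK'
  obtain ⟨hσ, hcons⟩ := hσK'
  set S : Set Z := {z : Z | (σ z * σ z).trace ≠ 1} with hS
  have hSfin : S.Finite := Set.toFinite _
  set T : Finset Z := hSfin.toFinset with hT
  have hTcard : R < T.card := by
    rw [← Set.ncard_eq_toFinset_card S hSfin]
    exact hR
  -- the perturbation directions
  set H : Z → Matrix (Fin d) (Fin d) ℂ := fun z =>
    if hz : (σ z * σ z).trace ≠ 1 then
      (exists_perturbation (hσ z).1 (hσ z).2 hz).choose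
    else 0 with hHdef
  have hHspec : ∀ z, (σ z * σ z).trace ≠ 1 →
      (H z).IsHermitian ∧ (H z).trace = 0 ∧ (σ z + H z).PosSemidef ∧
      (σ z - H z).PosSemidef ∧ 0 < (((H z) * (H z)).trace).re := by
    intro z hz
    have : H z = (exists_perturbation (hσ z).1 (hσ z).2 hz).choose := by
      rw [hHdef]; exact dif_pos hz
    rw [this]
    exact (exists_perturbation (hσ z).1 (hσ z).2 hz).choose_spec
  have hH0 : ∀ z, ¬ ((σ z * σ z).trace ≠ 1) → H z = 0 := by
    intro z hz
    rw [hHdef]; exact dif_neg hz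
  have hherm : ∀ z, (H z).IsHermitian := by
    intro z
    by_cases hz : (σ z * σ z).trace ≠ 1
    · exact (hHspec z hz).1
    · rw [hH0 z hz]; exact Matrix.isHermitian_zero
  have htrH : ∀ z, (H z).trace = 0 := by
    intro z
    by_cases hz : (σ z * σ z).trace ≠ 1
    · exact (hHspec z hz).2.1
    · rw [hH0 z hz]; simp
  have hplus : ∀ z, (σ z + H z).PosSemidef := by
    intro z
    by_cases hz : (σ z * σ z).trace ≠ 1
    · exact (hHspec z hz).2.2.1
    · rw [hH0 z hz, add_zero]; exact (hσ z).1
  have hminus : ∀ z, (σ z - H z).PosSemidef := by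
    intro z
    by_cases hz : (σ z * σ z).trace ≠ 1
    · exact (hHspec z hz).2.2.2.1
    · rw [hH0 z hz, sub_zero]; exact (hσ z).1
  have hHHnn : ∀ z, 0 ≤ (((H z) * (H z)).trace).re := by
    intro z
    by_cases hz : (σ z * σ z).trace ≠ 1
    · exact le_of_lt (hHspec z hz).2.2.2.2
    · rw [hH0 z hz]
      simp
  -- linear dependence of the constraint vectors
  set v : Z → Fin R → ℝ := fun z => fun i => p z * ((A z i * H z).trace).re with hv
  have hdep : ¬ LinearIndependent ℝ (fun z : {x // x ∈ T} => v ↑z) := by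
    intro hli
    have hcard := hli.fintype_card_le_finrank
    rw [Module.finrank_fin_fun, Fintype.card_coe] at hcard
    omega
  obtain ⟨gc, hgsum, z₀, hz₀⟩ := Fintype.not_linearIndependent_iff.mp hdep
  set m : ℝ := ∑ z : {x // x ∈ T}, |gc z| with hm
  have hmpos : 0 < m := by
    refine Finset.sum_pos' (fun z _ => abs_nonneg _) ⟨z₀, Finset.mem_univ z₀, ?_⟩
    exact abs_pos.mpr hz₀
  set c : Z → ℝ := fun z => if hz : z ∈ T then gc ⟨z, hz⟩ / m else 0 with hc
  have hcval : ∀ (z : {x // x ∈ T}), c ↑z = gc z / m := by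
    intro z
    rw [hc]
    simp only [dif_pos z.2]
  have hc1 : ∀ z, |c z| ≤ 1 := by
    intro z
    by_cases hz : z ∈ T
    · have : c z = gc ⟨z, hz⟩ / m := by rw [hc]; simp only [dif_pos hz]
      rw [this, abs_div, abs_of_pos hmpos, div_le_one hmpos]
      exact Finset.single_le_sum (f := fun z : {x // x ∈ T} => |gc z|)
        (fun z _ => abs_nonneg _) (Finset.mem_univ (⟨z, hz⟩ : {x // x ∈ T}))
    · rw [hc]; simp only [dif_neg hz]; simp
  have hcz₀ : c ↑z₀ ≠ 0 := by
    rw [hcval z₀]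
    exact div_ne_zero hz₀ (ne_of_gt hmpos)
  have hc0 : ∀ z, z ∉ T → c z = 0 := by
    intro z hz
    rw [hc]; simp only [dif_neg hz]
  -- the linear dependence in coordinates
  have hgsum' : ∀ i, ∑ z : {x // x ∈ T}, gc z * v (↑z) i = 0 := by
    intro i
    have := congrFun hgsum i
    simpa [Finset.sum_apply, Pi.smul_apply, smul_eq_mul] using this
  have hzero : ∀ i : Fin R, ∑ z, c z * v z i = 0 := by
    intro i
    have step1 : ∑ z, c z * v z i = ∑ z ∈ T, c z * v z i := by
      refine (Finset.sum_subset (Finset.subset_univ T) ?_).symm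
      intro z _ hz
      rw [hc0 z hz, zero_mul]
    rw [step1, ← Finset.sum_coe_sort]
    calc ∑ z : {x // x ∈ T}, c ↑z * v (↑z) i
        = ∑ z : {x // x ∈ T}, (1/m) * (gc z * v (↑z) i) := by
          refine Finset.sum_congr rfl fun z _ => ?_
          rw [hcval z]
          ring
      _ = (1/m) * ∑ z : {x // x ∈ T}, gc z * v (↑z) i := by rw [Finset.mul_sum]
      _ = 0 := by rw [hgsum' i, mul_zero]
  -- complex vanishing of constraint perturbation
  have hconsD : ∀ i : Fin R, ∑ z, (p z : ℂ) * ((A z i * (c z • H z)).trace) = 0 := by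
    intro i
    have key : ∀ z, (p z : ℂ) * ((A z i * (c z • H z)).trace) = ((c z * v z i : ℝ) : ℂ) := by
      intro z
      rw [Matrix.mul_smul, Matrix.trace_smul, trace_mul_herm_real (hA z i) (hherm z),
        Complex.real_smul]
      push_cast [hv]
      ring
    rw [Finset.sum_congr rfl (fun z _ => key z), ← Complex.ofReal_sum, hzero i,
      Complex.ofReal_zero]
  -- membership of the perturbed ensembles
  have hmem : ∀ ε : ℝ, |ε| = 1 → (fun z => σ z + (ε * c z) • H z) ∈ K := by
    intro ε hε
    rw [hK]
    constructor
    · intro z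
      constructor
      · refine psd_combo (hplus z) (hminus z) ?_
        rw [abs_mul, hε, one_mul]
        exact hc1 z
      · rw [Matrix.trace_add, Matrix.trace_smul, htrH z, smul_zero, add_zero, (hσ z).2]
    · intro i
      have expand : ∀ z, (p z : ℂ) * ((A z i * (σ z + (ε * c z) • H z)).trace)
          = (p z : ℂ) * ((A z i * σ z).trace)
            + (ε:ℂ) * ((p z : ℂ) * ((A z i * (c z • H z)).trace)) := by
        intro z
        rw [Matrix.mul_add, Matrix.trace_add]
        have hss : ((ε * c z) • H z) = ε • (c z • H z) := by rw [smul_smul]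
        rw [hss, Matrix.mul_smul, Matrix.trace_smul, Complex.real_smul]
        ring
      rw [Finset.sum_congr rfl fun z _ => expand z, Finset.sum_add_distrib, hcons i,
        ← Finset.mul_sum, hconsD i, mul_zero, add_zero]
  -- expansion of the purity
  have hexp : ∀ (r : ℝ) (z : Z), (((σ z + r • H z) * (σ z + r • H z)).trace).re
      = ((σ z * σ z).trace).re + r * (2 * ((σ z * H z).trace).re)
        + r^2 * (((H z) * (H z)).trace).re := by
    intro r z
    have hmul : (σ z + r • H z) * (σ z + r • H z)
        = σ z * σ z + (r • (σ z * H z) + (r • (H z * σ z) + (r^2) • (H z * H z))) := by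
      rw [Matrix.add_mul, Matrix.mul_add, Matrix.mul_add]
      simp only [Matrix.smul_mul, Matrix.mul_smul, smul_smul]
      rw [show r * r = r^2 by ring]
      abel
    rw [hmul, Matrix.trace_add, Matrix.trace_add, Matrix.trace_add, Matrix.trace_smul,
      Matrix.trace_smul, Matrix.trace_smul, Matrix.trace_mul_comm (H z) (σ z)]
    simp only [Complex.add_re, Complex.real_smul, Complex.re_ofReal_mul]
    ring
  set L : ℝ := ∑ z, c z * (2 * ((σ z * H z).trace).re) with hL
  set Q : ℝ := ∑ z, (c z)^2 * (((H z) * (H z)).trace).re with hQ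
  have hgτ : ∀ ε : ℝ, |ε| = 1 → g (fun z => σ z + (ε * c z) • H z) = g σ + ε * L + Q := by
    intro ε hε
    have hε2 : ε^2 = 1 := by rw [← sq_abs, hε, one_pow]
    show (∑ z, (((σ z + (ε * c z) • H z) * (σ z + (ε * c z) • H z)).trace).re) = _
    rw [Finset.sum_congr rfl fun z _ => hexp (ε * c z) z, Finset.sum_add_distrib,
      Finset.sum_add_distrib]
    have h1 : ∑ z, (ε * c z) * (2 * ((σ z * H z).trace).re) = ε * L := by
      rw [hL, Finset.mul_sum]
      refine Finset.sum_congr rfl fun z _ => ?_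
      ring
    have h2 : ∑ z, (ε * c z)^2 * (((H z) * (H z)).trace).re = Q := by
      rw [hQ]
      refine Finset.sum_congr rfl fun z _ => ?_
      rw [mul_pow, hε2, one_mul]
    rw [h1, h2]
  have hQpos : 0 < Q := by
    rw [hQ]
    refine Finset.sum_pos' (fun z _ => mul_nonneg (sq_nonneg _) (hHHnn z))
      ⟨↑z₀, Finset.mem_univ _, ?_⟩
    have hzS : (σ (↑z₀ : Z) * σ (↑z₀ : Z)).trace ≠ 1 := by
      have h3 := hSfin.mem_toFinset.mp z₀.2
      rw [hS] at h3
      exact h3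
    refine mul_pos ?_ (hHspec _ hzS).2.2.2.2
    rw [← sq_abs]
    exact pow_pos (abs_pos.mpr hcz₀) 2
  rcases le_or_gt 0 L with hL0 | hL0
  · have h1 : g (fun z => σ z + ((1:ℝ) * c z) • H z) ≤ g σ := hmax (hmem 1 (by norm_num))
    rw [hgτ 1 (by norm_num)] at h1
    linarith
  · have h1 : g (fun z => σ z + ((-1:ℝ) * c z) • H z) ≤ g σ := hmax (hmem (-1) (by norm_num))
    rw [hgτ (-1) (by norm_num)] at h1
    linarith
end

section
/- Let Z be a finite set, p : Z → ℝ with p_z ≥ 0 and Σ_z p_z = 1, and (ρ_z)_{z∈Z} a family of d×d density matrices. Fix Hermitian d×d matrices A_z^{(i)} for z ∈ Z and i = 1,…,R. Define ã_z^{(i)} = A_z^{(i)} − (Tr[A_z^{(i)}]/d)·I (the traceless part), a_i = (1/d) Σ_z p_z Tr[A_z^{(i)}], b_i = Σ_z p_z Tr[A_z^{(i)} ρ_z], and the R×R Gram matrix L_{ij} = Σ_z p_z Tr[ã_z^{(i)} ã_z^{(j)}]. If L is invertible, then the average global purity satisfies Σ_z p_z Tr[ρ_z²] ≥ 1/d +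 Σ_{i,j=1}^R (b_i − a_i) [L^{−1}]_{ij} (b_j − a_j). -/
open Matrix ComplexOrder

/-- For a Hermitian matrix `M`, the trace of `M * M` has nonnegative real part. -/
lemma herm_trace_sq_nonneg {d : ℕ} (M : Matrix (Fin d) (Fin d) ℂ) (hM : M.IsHermitian) :
    0 ≤ ((M * M).trace).re := by
  have h : M * M = M * Mᴴ := by rw [hM.eq]
  rw [h]
  have : ((M * Mᴴ).trace) = ∑ i, ∑ j, (M i j * (starRingEnd ℂ) (M i j)) := by
    simp [Matrix.trace, Matrix.mul_apply, Matrix.diag, Matrix.conjTranspose_apply]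
  rw [this]
  rw [Complex.re_sum]
  apply Finset.sum_nonneg
  intro i _
  rw [Complex.re_sum]
  apply Finset.sum_nonneg
  intro j _
  rw [Complex.mul_conj, Complex.ofReal_re]
  exact Complex.normSq_nonneg _

/-- **Purity lower bound (Eq. (25) of the paper).** Given empirically measurable values
`b_i = Σ_z p_z Tr[A_z^{(i)} ρ_z]`, the average global purity is bounded below by
`1/d + Σ_{ij} (b_i − a_i)[L⁻¹]_{ij}(b_j − a_j)` where `L` is the Gram matrix of the
traceless parts of the `A_z^{(i)}`. -/
theorem average_purity_gram_lower_bound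
    {Z : Type*} [Fintype Z] {d R : ℕ}
    (p : Z → ℝ) (hp : ∀ z, 0 ≤ p z) (hp1 : ∑ z, p z = 1)
    (ρ : Z → Matrix (Fin d) (Fin d) ℂ)
    (hρ : ∀ z, (ρ z).PosSemidef ∧ (ρ z).trace = 1)
    (A : Z → Fin R → Matrix (Fin d) (Fin d) ℂ)
    (hA : ∀ z i, (A z i).IsHermitian)
    (At : Z → Fin R → Matrix (Fin d) (Fin d) ℂ)
    (hAt : ∀ z i, At z i = A z i - ((A z i).trace / (d : ℂ)) • (1 : Matrix (Fin d) (Fin d) ℂ))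
    (a b : Fin R → ℝ)
    (ha : ∀ i, a i = (1 / (d : ℝ)) * ∑ z, p z * ((A z i).trace).re)
    (hb : ∀ i, b i = ∑ z, p z * ((A z i * ρ z).trace).re)
    (L : Matrix (Fin R) (Fin R) ℝ)
    (hL : ∀ i j, L i j = ∑ z, p z * ((At z i * At z j).trace).re)
    (hLunit : IsUnit L) :
    1 / (d : ℝ) + ∑ i, ∑ j, (b i - a i) * L⁻¹ i j * (b j - a j)
      ≤ ∑ z, p z * ((ρ z * ρ z).trace).re := by
  -- Z is nonempty, hence d > 0
  have hZ : Nonempty Z := by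
    by_contra h
    rw [not_nonempty_iff] at h
    simp [Finset.sum_empty] at hp1
  obtain ⟨z₀⟩ := hZ
  have hd : (d : ℝ) ≠ 0 := by
    intro h
    have hd0 : d = 0 := by exact_mod_cast h
    have := (hρ z₀).2
    subst hd0
    simp [Matrix.trace] at this
  have hdC : (d : ℂ) ≠ 0 := by exact_mod_cast hd
  -- traceless part of ρ
  set σ : Z → Matrix (Fin d) (Fin d) ℂ := fun z => ρ z - (d : ℂ)⁻¹ • 1 with hσ
  set c : Fin R → ℝ := fun i => b i - a i with hc
  set x : Fin R → ℝ := fun i => ∑ j, L⁻¹ i j * c j with hx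
  -- Hermitian facts
  have hρH : ∀ z, (ρ z).IsHermitian := fun z => (hρ z).1.isHermitian
  have hσH : ∀ z, (σ z).IsHermitian := by
    intro z
    have : ((d : ℂ)⁻¹ • (1 : Matrix (Fin d) (Fin d) ℂ)).IsHermitian := by
      show _ᴴ = _
      rw [Matrix.conjTranspose_smul, Matrix.conjTranspose_one]
      congr 1
      simp [star_inv₀]
    exact (hρH z).sub this
  have hAtr : ∀ z i, star ((A z i).trace) = (A z i).trace := by
    intro z i
    rw [← Matrix.trace_conjTranspose, (hA z i).eq]
  have hAtH : ∀ z i, (At z i).IsHermitian := by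
    intro z i
    rw [hAt z i]
    refine (hA z i).sub ?_
    show _ᴴ = _
    rw [Matrix.conjTranspose_smul, Matrix.conjTranspose_one]
    congr 1
    rw [star_div₀, hAtr z i]
    simp
  -- the deviation matrix
  set M : Z → Matrix (Fin d) (Fin d) ℂ :=
    fun z => σ z - ∑ i, ((x i : ℂ)) • At z i with hM
  have hMH : ∀ z, (M z).IsHermitian := by
    intro z
    refine (hσH z).sub ?_
    show (∑ i, ((x i : ℂ)) • At z i)ᴴ = _
    rw [Matrix.conjTranspose_sum]
    refine Finset.sum_congr rfl fun i _ => ?_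
    rw [Matrix.conjTranspose_smul, (hAtH z i).eq]
    simp
  -- complex-level trace identities
  have h1 : ∀ z, ((σ z * σ z).trace) = (ρ z * ρ z).trace - (d : ℂ)⁻¹ := by
    intro z
    simp only [hσ, sub_mul, mul_sub, Matrix.smul_mul, Matrix.mul_smul, one_mul, mul_one,
      Matrix.trace_sub, Matrix.trace_smul, Matrix.trace_one, smul_eq_mul, (hρ z).2,
      Fintype.card_fin]
    try field_simp
    try ring
  have h2 : ∀ z i, ((At z i * σ z).trace) = (A z i * ρ z).trace - (A z i).trace / d := by
    intro z i
    simp only [hσ, hAt, sub_mul, mul_sub, Matrix.smul_mul, Matrix.mul_smul, one_mul, mul_one,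
      Matrix.trace_sub, Matrix.trace_smul, Matrix.trace_one, smul_eq_mul, (hρ z).2,
      Fintype.card_fin]
    try field_simp
    try ring
  have h3 : ∀ z, ((M z * M z).trace)
      = (σ z * σ z).trace - 2 * ∑ i, (x i : ℂ) * (At z i * σ z).trace
        + ∑ i, ∑ j, (x i : ℂ) * (x j : ℂ) * (At z i * At z j).trace := by
    intro z
    have hcomm : ∀ i, (σ z * At z i).trace = (At z i * σ z).trace :=
      fun i => Matrix.trace_mul_comm _ _
    simp only [hM, sub_mul, mul_sub, Matrix.sum_mul, Matrix.mul_sum, Matrix.smul_mul,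
      Matrix.mul_smul, Matrix.trace_sub, Matrix.trace_sum, Matrix.trace_smul, smul_smul,
      smul_eq_mul, hcomm]
    have hswap : ∑ i, (x i : ℂ) * ∑ j, (x j : ℂ) * (At z j * At z i).trace
        = ∑ i, ∑ j, (x i : ℂ) * (x j : ℂ) * (At z i * At z j).trace := by
      simp only [Finset.mul_sum]
      rw [Finset.sum_comm]
      exact Finset.sum_congr rfl fun i _ => Finset.sum_congr rfl fun j _ => by ring
    rw [hswap]
    ring
  -- real part versions
  have hre1 : ∀ z, ((σ z * σ z).trace).re = ((ρ z * ρ z).trace).re - 1 / (d : ℝ) := by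
    intro z
    rw [h1 z, Complex.sub_re]
    congr 1
    rw [show ((d : ℂ))⁻¹ = (((1 : ℝ) / d : ℝ) : ℂ) by push_cast; ring]
    exact Complex.ofReal_re _
  have hre2 : ∀ z i, ((At z i * σ z).trace).re
      = ((A z i * ρ z).trace).re - ((A z i).trace).re / d := by
    intro z i
    rw [h2 z i, Complex.sub_re]
    congr 1
    have hT : (A z i).trace = (((A z i).trace).re : ℂ) :=
      (Complex.conj_eq_iff_re.mp (hAtr z i)).symm
    rw [hT]
    rw [show ((((A z i).trace).re : ℂ)) / (d : ℂ) = (((((A z i).trace).re / d : ℝ)) : ℂ) by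
      push_cast; ring]
    simp [Complex.ofReal_re]
  have hre3 : ∀ z, ((M z * M z).trace).re
      = ((σ z * σ z).trace).re - 2 * ∑ i, x i * ((At z i * σ z).trace).re
        + ∑ i, ∑ j, x i * x j * ((At z i * At z j).trace).re := by
    intro z
    rw [h3 z, Complex.add_re, Complex.sub_re]
    congr 2
    · rw [show (2 : ℂ) * ∑ i, (x i : ℂ) * (At z i * σ z).trace
          = ((2 : ℝ) : ℂ) * ∑ i, (x i : ℂ) * (At z i * σ z).trace by norm_num]
      rw [Complex.re_ofReal_mul, Complex.re_sum]
      congr 1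
      exact Finset.sum_congr rfl fun i _ => Complex.re_ofReal_mul _ _
    · rw [Complex.re_sum]
      refine Finset.sum_congr rfl fun i _ => ?_
      rw [Complex.re_sum]
      refine Finset.sum_congr rfl fun j _ => ?_
      rw [show ((x i : ℂ)) * (x j : ℂ) * (At z i * At z j).trace
          = ((x i * x j : ℝ) : ℂ) * (At z i * At z j).trace by push_cast; ring]
      exact Complex.re_ofReal_mul _ _
  -- averaged quantities
  have hCi : ∀ i, (∑ z, p z * ((At z i * σ z).trace).re) = c i := by
    intro i
    simp only [hre2, mul_sub]
    rw [Finset.sum_sub_distrib]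
    simp only [hc]
    rw [hb, ha]
    congr 1
    rw [Finset.mul_sum]
    refine Finset.sum_congr rfl fun z _ => ?_
    field_simp
    try ring
  have hP : (∑ z, p z * ((σ z * σ z).trace).re)
      = (∑ z, p z * ((ρ z * ρ z).trace).re) - 1 / (d : ℝ) := by
    simp only [hre1, mul_sub]
    rw [Finset.sum_sub_distrib, ← Finset.sum_mul, hp1, one_mul]
  -- nonnegativity
  have hpos : 0 ≤ ∑ z, p z * ((M z * M z).trace).re := by
    apply Finset.sum_nonneg
    intro z _
    exact mul_nonneg (hp z) (herm_trace_sq_nonneg _ (hMH z))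
  -- expand the averaged square
  have hexp : ∑ z, p z * ((M z * M z).trace).re
      = (∑ z, p z * ((σ z * σ z).trace).re)
        - 2 * ∑ i, x i * c i
        + ∑ i, ∑ j, x i * x j * L i j := by
    have hmid : ∑ z, p z * (2 * ∑ i, x i * ((At z i * σ z).trace).re)
        = 2 * ∑ i, x i * c i := by
      calc ∑ z, p z * (2 * ∑ i, x i * ((At z i * σ z).trace).re)
          = ∑ z, ∑ i, 2 * (x i * (p z * ((At z i * σ z).trace).re)) := by
            refine Finset.sum_congr rfl fun z _ => ?_
            simp only [Finset.mul_sum]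
            exact Finset.sum_congr rfl fun i _ => by ring
        _ = ∑ i, ∑ z, 2 * (x i * (p z * ((At z i * σ z).trace).re)) := Finset.sum_comm
        _ = ∑ i, 2 * (x i * c i) := by
            refine Finset.sum_congr rfl fun i _ => ?_
            calc ∑ z, 2 * (x i * (p z * ((At z i * σ z).trace).re))
                = 2 * (x i * ∑ z, p z * ((At z i * σ z).trace).re) := by
                  simp only [Finset.mul_sum]
              _ = 2 * (x i * c i) := by rw [hCi i]
        _ = 2 * ∑ i, x i * c i := by rw [Finset.mul_sum]
    have hq : ∑ z, p z * (∑ i, ∑ j, x i * x j * ((At z i * At z j).trace).re)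
        = ∑ i, ∑ j, x i * x j * L i j := by
      calc ∑ z, p z * (∑ i, ∑ j, x i * x j * ((At z i * At z j).trace).re)
          = ∑ z, ∑ i, ∑ j, x i * x j * (p z * ((At z i * At z j).trace).re) := by
            refine Finset.sum_congr rfl fun z _ => ?_
            simp only [Finset.mul_sum]
            exact Finset.sum_congr rfl fun i _ => Finset.sum_congr rfl fun j _ => by ring
        _ = ∑ i, ∑ z, ∑ j, x i * x j * (p z * ((At z i * At z j).trace).re) :=
            Finset.sum_comm
        _ = ∑ i, ∑ j, x i * x j * L i j := by
            refine Finset.sum_congr rfl fun i _ => ?_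
            rw [Finset.sum_comm]
            refine Finset.sum_congr rfl fun j _ => ?_
            rw [hL i j, ← Finset.mul_sum]
    calc ∑ z, p z * ((M z * M z).trace).re
        = ∑ z, (p z * ((σ z * σ z).trace).re
            - p z * (2 * ∑ i, x i * ((At z i * σ z).trace).re)
            + p z * (∑ i, ∑ j, x i * x j * ((At z i * At z j).trace).re)) := by
          refine Finset.sum_congr rfl fun z _ => ?_
          rw [hre3 z]
          ring
      _ = _ := by rw [Finset.sum_add_distrib, Finset.sum_sub_distrib, hmid, hq]
  -- linear algebra: L *ᵥ x = c
  have hdet : IsUnit L.det := (Matrix.isUnit_iff_isUnit_det L).mp hLunit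
  have hxv : x = L⁻¹ *ᵥ c := by
    funext i
    simp [hx, Matrix.mulVec, dotProduct]
  have hLx : L *ᵥ x = c := by
    rw [hxv, Matrix.mulVec_mulVec, Matrix.mul_nonsing_inv L hdet, Matrix.one_mulVec]
  have hquad : ∑ i, ∑ j, x i * x j * L i j = ∑ i, x i * c i := by
    refine Finset.sum_congr rfl fun i _ => ?_
    have : (L *ᵥ x) i = c i := by rw [hLx]
    rw [← this]
    simp only [Matrix.mulVec, dotProduct]
    rw [Finset.mul_sum]
    refine Finset.sum_congr rfl fun j _ => ?_
    ring
  have hgoal : ∑ i, ∑ j, (b i - a i) * L⁻¹ i j * (b j - a j) = ∑ i, x i * c i := by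
    refine Finset.sum_congr rfl fun i _ => ?_
    simp only [hx]
    rw [Finset.sum_mul]
    refine Finset.sum_congr rfl fun j _ => ?_
    simp only [hc]
    ring
  rw [hgoal]
  rw [hexp, hquad, hP] at hpos
  linarith
end
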